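/- arXiv:1507.03101 — 2 statements merged into one kernel-verified Lean document; each statement's English description precedes it below -/
import Mathlib

section
/- Let p be a prime and α a positive integer. Then in ℤ[[q]], (q;q)_∞^{p^α} ≡ (q^p;q^p)_∞^{p^{α−1}} (mod p^α), i.e., every coefficient of the difference is divisible by p^α. -/
/-- The Euler product `(q;q)_∞ = ∏_{k≥1} (1 - q^k)` as a formal power series over `ℤ`.
Its `n`-th coefficient agrees with that of any truncated product `∏_{k=1}^{N}(1-q^k)`
with `N ≥ n`. -/
noncomputable def eulerQ : PowerSeries ℤ :=
  PowerSeries.mk fun n =>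
    PowerSeries.coeff (R := ℤ) n (∏ k ∈ Finset.range (n + 1), (1 - PowerSeries.X ^ (k + 1)))

/-- Image of a power series under the substitution `q ↦ q^k` (intended for `k ≥ 1`). -/
noncomputable def substPow (k : ℕ) (f : PowerSeries ℤ) : PowerSeries ℤ :=
  PowerSeries.mk fun n => if k ∣ n then PowerSeries.coeff (R := ℤ) (n / k) f else 0

/-- Image of a power series under the substitution `q ↦ -q`. -/
noncomputable def substNeg (f : PowerSeries ℤ) : PowerSeries ℤ :=
  PowerSeries.rescale (-1 : ℤ) f

/-- Ramanujan's theta function `φ(q) = ∑_{n ∈ ℤ} q^{n²}`. -/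
noncomputable def phiTheta : PowerSeries ℤ :=
  PowerSeries.mk fun n => (Set.ncard {m : ℤ | m ^ 2 = (n : ℤ)} : ℤ)

/-- Ramanujan's theta function `ψ(q) = ∑_{n ≥ 0} q^{n(n+1)/2}`. -/
noncomputable def psiTheta : PowerSeries ℤ :=
  PowerSeries.mk fun n => (Set.ncard {m : ℕ | m * (m + 1) / 2 = n} : ℤ)

/-- The cubic theta function `a(q) = ∑_{m,n ∈ ℤ} q^{m² + mn + n²}`. -/
noncomputable def aCubic : PowerSeries ℤ :=
  PowerSeries.mk fun n =>
    (Set.ncard {p : ℤ × ℤ | p.1 ^ 2 + p.1 * p.2 + p.2 ^ 2 = (n : ℤ)} : ℤ)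

/-- The theta function `X(q) = ∑_{n ∈ ℤ} q^{3n² + 2n}`. -/
noncomputable def xTheta : PowerSeries ℤ :=
  PowerSeries.mk fun n => (Set.ncard {m : ℤ | 3 * m ^ 2 + 2 * m = (n : ℤ)} : ℤ)

/-- The quadratic form `Q(m₁,…,m₅) = ∑ mᵢ² + ∑_{i<j} mᵢ mⱼ`. -/
def frobQ (v : Fin 5 → ℤ) : ℤ :=
  (∑ i, v i ^ 2) + ∑ i, ∑ j, if i < j then v i * v j else 0

/-- The theta series `∑_{m₁,…,m₅ ∈ ℤ} q^{Q(m₁,…,m₅)}`. -/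
noncomputable def frobTheta : PowerSeries ℤ :=
  PowerSeries.mk fun n => (Set.ncard {v : Fin 5 → ℤ | frobQ v = (n : ℤ)} : ℤ)

/-- The 6-colored generalized Frobenius partition function `cφ₆(n)`, defined by
`∑_{n≥0} cφ₆(n) qⁿ = (q;q)_∞^{-6} · ∑_{m₁,…,m₅} q^{Q(m₁,…,m₅)}`; here `(q;q)_∞^{-1}` is
realized via `PowerSeries.invOfUnit` (the constant coefficient of `eulerQ` is `1`). -/
noncomputable def cphi6 (n : ℕ) : ℤ :=
  PowerSeries.coeff (R := ℤ) n (PowerSeries.invOfUnit eulerQ 1 ^ 6 * frobTheta)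


section Aux
open PowerSeries
lemma C_dvd_iff {c : ℤ} {f : PowerSeries ℤ} :
    PowerSeries.C (R := ℤ) c ∣ f ↔ ∀ n, c ∣ PowerSeries.coeff (R := ℤ) n f := by
  constructor
  · rintro ⟨g, rfl⟩ n
    exact ⟨coeff (R := ℤ) n g, by rw [PowerSeries.coeff_C_mul]⟩
  · intro h
    refine ⟨PowerSeries.mk fun n => (h n).choose, ?_⟩
    ext n
    rw [PowerSeries.coeff_C_mul, PowerSeries.coeff_mk, ← (h n).choose_spec]

lemma pow_card_coeff (p : ℕ) (hp : p.Prime) (f : PowerSeries (ZMod p)) (n : ℕ) :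
    PowerSeries.coeff (R := ZMod p) n (f ^ p) =
      if p ∣ n then PowerSeries.coeff (R := ZMod p) (n / p) f else 0 := by
  haveI : Fact p.Prime := ⟨hp⟩
  set T := PowerSeries.trunc (n + 1) f with hT
  have hdvd : (X : PowerSeries (ZMod p)) ^ (n + 1) ∣ f - ↑T := by
    rw [X_pow_dvd_iff]
    intro m hm
    simp [hT, Polynomial.coeff_coe, coeff_trunc, hm]
  have hdvd2 : (X : PowerSeries (ZMod p)) ^ (n + 1) ∣ f ^ p - (↑T : PowerSeries (ZMod p)) ^ p :=
    dvd_trans hdvd (sub_dvd_pow_sub_pow _ _ p)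
  have hco : PowerSeries.coeff (R := ZMod p) n (f ^ p) =
      PowerSeries.coeff (R := ZMod p) n ((↑T : PowerSeries (ZMod p)) ^ p) := by
    rw [X_pow_dvd_iff] at hdvd2
    have := hdvd2 n (Nat.lt_succ_self n)
    rw [map_sub, sub_eq_zero] at this
    exact this
  have hTp : T ^ p = Polynomial.expand (ZMod p) p T := by
    have := Polynomial.map_frobenius_expand p T
    rw [ZMod.frobenius_zmod, Polynomial.map_id] at this
    exact this.symm
  rw [hco, ← Polynomial.coe_pow, Polynomial.coeff_coe, hTp,
    Polynomial.coeff_expand hp.pos]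
  split_ifs with h
  · rw [hT, PowerSeries.coeff_trunc, if_pos (Nat.lt_succ_of_le (Nat.div_le_self n p))]
  · rfl

lemma base_dvd (p : ℕ) (hp : p.Prime) :
    PowerSeries.C (R := ℤ) (p : ℤ) ∣ eulerQ ^ p - substPow p eulerQ := by
  rw [C_dvd_iff]
  intro n
  have h0 : ((PowerSeries.coeff (R := ℤ) n (eulerQ ^ p - substPow p eulerQ) : ℤ) : ZMod p) = 0 := by
    set φ := Int.castRingHom (ZMod p)
    have : ((PowerSeries.coeff (R := ℤ) n (eulerQ ^ p - substPow p eulerQ) : ℤ) : ZMod p)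
        = PowerSeries.coeff (R := ZMod p) n (PowerSeries.map φ (eulerQ ^ p - substPow p eulerQ)) := by
      rw [PowerSeries.coeff_map]; rfl
    rw [this, map_sub, map_pow, map_sub, pow_card_coeff p hp]
    have h1 : PowerSeries.coeff (R := ZMod p) n (PowerSeries.map φ (substPow p eulerQ))
        = if p ∣ n then φ (PowerSeries.coeff (R := ℤ) (n / p) eulerQ) else 0 := by
      rw [PowerSeries.coeff_map, substPow, PowerSeries.coeff_mk, apply_ite φ, map_zero]
    rw [h1]
    split_ifs with h
    · rw [PowerSeries.coeff_map]; exact sub_self _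
    · exact sub_self _
  exact (ZMod.intCast_zmod_eq_zero_iff_dvd _ _).mp h0

end Aux

/-- For a prime `p` and `α ≥ 1`, `(q;q)_∞^{p^α} ≡ (q^p;q^p)_∞^{p^{α-1}} (mod p^α)`
coefficientwise. -/
theorem eulerQ_pow_prime_pow_congr (p : ℕ) (hp : p.Prime) (α : ℕ) (hα : 1 ≤ α) (n : ℕ) :
    PowerSeries.coeff (R := ℤ) n (eulerQ ^ p ^ α) ≡
      PowerSeries.coeff (R := ℤ) n (substPow p eulerQ ^ p ^ (α - 1)) [ZMOD ((p : ℤ) ^ α)] := by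
  have hbase : ((p : PowerSeries ℤ)) ∣ eulerQ ^ p - substPow p eulerQ := by
    have := base_dvd p hp
    rwa [map_natCast] at this
  have hd := dvd_sub_pow_of_dvd_sub hbase (α - 1)
  rw [Nat.sub_add_cancel hα, ← pow_mul, ← pow_succ', Nat.sub_add_cancel hα] at hd
  have hC : ((p : PowerSeries ℤ)) ^ α = PowerSeries.C (R := ℤ) ((p : ℤ) ^ α) := by
    rw [map_pow, map_natCast]
  rw [hC, C_dvd_iff] at hd
  have := hd n
  rw [map_sub] at this
  exact Int.ModEq.symm (Int.modEq_iff_dvd.mpr this)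
end

section
/- The part of (q;q)_∞³ supported on exponents divisible by 3 equals ∑_{m∈ℤ} (−1)^m (6m+1) q^{3m(3m+1)/2}; that is, for every integer n ≥ 0, the coefficient of q^{3n} in (q;q)_∞³ equals (−1)^m (6m+1) if there exists m ∈ ℤ with 3n = 3m(3m+1)/2, and equals 0 otherwise. -/
open Polynomial Finset

noncomputable def gb : ℕ → ℕ → Polynomial ℤ
  | _, 0 => 1
  | 0, _+1 => 0
  | m+1, j+1 => gb m (j+1) + X ^ (m - j) * gb m j

lemma gb_zero_right (m : ℕ) : gb m 0 = 1 := by cases m <;> rfl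

lemma gb_eq_zero : ∀ {m j : ℕ}, m < j → gb m j = 0
  | 0, _+1, _ => rfl
  | m+1, j+1, h => by
      rw [gb, gb_eq_zero (by omega), gb_eq_zero (show m < j by omega), mul_zero, add_zero]

lemma gb_self : ∀ m, gb m m = 1
  | 0 => rfl
  | m+1 => by
      rw [gb, gb_eq_zero (Nat.lt_succ_self m), gb_self m, mul_one, zero_add,
        Nat.sub_self, pow_zero]

noncomputable def Pq (n : ℕ) : Polynomial ℤ := ∏ k ∈ range n, (1 - X ^ (k+1))

lemma Pq_succ (n : ℕ) : Pq (n+1) = Pq n * (1 - X ^ (n+1)) := prod_range_succ _ _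

lemma Pq_ne_zero (n : ℕ) : Pq n ≠ 0 := by
  apply prod_ne_zero_iff.2
  intro k _ h
  have := congrArg (fun p => Polynomial.coeff p 0) h
  simp at this

lemma gb_mul_Pq : ∀ m j, j ≤ m → gb m j * (Pq j * Pq (m - j)) = Pq m := by
  intro m
  induction m with
  | zero => intro j hj; interval_cases j; simp [gb_zero_right, Pq]
  | succ m ih =>
    intro j hj
    match j with
    | 0 => simp [gb_zero_right, Pq]
    | j+1 =>
      rcases Nat.lt_or_ge j m with hjm | hjm
      · obtain ⟨d, hd⟩ : ∃ d, m = j + 1 + d := ⟨m - j - 1, by omega⟩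
        subst hd
        have e1 := ih (j+1) (by omega)
        rw [show j+1+d-(j+1) = d by omega] at e1
        have e2 := ih j (by omega)
        rw [show j+1+d-j = d+1 by omega] at e2
        have hg : gb (j+1+d+1) (j+1) = gb (j+1+d) (j+1) + X ^ (d+1) * gb (j+1+d) j := by
          show gb ((j+1+d)+1) (j+1) = _
          rw [gb, show j+1+d-j = d+1 by omega]
        rw [show (j+1+d+1)-(j+1) = d+1 by omega, hg, Pq_succ (j+1+d), Pq_succ d, Pq_succ j]
        rw [Pq_succ j] at e1
        rw [Pq_succ d] at e2
        linear_combination (1 - X^(d+1)) * e1 + (X^(d+1) * (1 - X^(j+1))) * e2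


      · have hj' : j = m := by omega
        subst hj'
        rw [gb_self, Nat.sub_self, one_mul]
        show Pq _ * Pq 0 = Pq _
        simp [Pq]

lemma gb_symm {m j : ℕ} (hj : j ≤ m) : gb m j = gb m (m - j) := by
  have h1 := gb_mul_Pq m j hj
  have h2 := gb_mul_Pq m (m - j) (Nat.sub_le _ _)
  rw [show m - (m - j) = j by omega] at h2
  have hne : Pq j * Pq (m - j) ≠ 0 := mul_ne_zero (Pq_ne_zero _) (Pq_ne_zero _)
  apply mul_right_cancel₀ hne
  linear_combination h1 - h2

/-- `tri j = j (j-1) / 2`. -/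
def tri : ℕ → ℕ
  | 0 => 0
  | j+1 => tri j + j

lemma two_tri : ∀ j, 2 * tri (j+1) = j * (j+1)
  | 0 => rfl
  | j+1 => by
      have := two_tri j
      show 2 * (tri (j+1) + (j+1)) = _
      have h : (j+1) * (j+1+1) = j * (j+1) + 2*(j+1) := by ring
      omega

lemma tri_add : ∀ a b, tri (a + b) = tri a + tri b + a * b
  | a, 0 => by simp [tri]
  | a, b+1 => by
      show tri ((a+b)+1) = tri a + (tri b + b) + a * (b+1)
      rw [tri, tri_add a b]
      ring

lemma tri_ge (k : ℕ) : k ≤ tri (k+1) := by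
  show k ≤ tri k + k
  omega

/-- `q` inside `ℤ[q][x]` (outer variable is `x`). -/
noncomputable def qS : Polynomial (Polynomial ℤ) := Polynomial.C Polynomial.X

/-- Generic term of the Gauss expansion. -/
noncomputable def gterm (n m j : ℕ) : Polynomial (Polynomial ℤ) :=
  (-1)^j * Polynomial.C (gb m j) * qS ^ (tri j + n*(m-j)) * Polynomial.X ^ j

lemma gterm_zero (n m j : ℕ) (h : m < j) : gterm n m j = 0 := by
  rw [gterm, gb_eq_zero h]
  simp

lemma gauss (n : ℕ) : ∀ m, ∏ k ∈ range m, (qS ^ n - Polynomial.X * qS ^ k)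
    = ∑ j ∈ range (m+1), gterm n m j
  | 0 => by simp [gterm, gb_zero_right, tri]
  | m+1 => by
    rw [prod_range_succ, gauss n m]
    have h0 : gterm n (m+1) 0 = gterm n m 0 * qS ^ n := by
      rw [gterm, gterm, gb_zero_right, gb_zero_right, map_one,
        show tri 0 + n * (m+1-0) = (tri 0 + n * (m - 0)) + n by simp [tri]; ring,
        pow_add]
      ring
    have hpt : ∀ j, j < m + 1 → gterm n (m+1) (j+1)
        = gterm n m (j+1) * qS ^ n - gterm n m j * (Polynomial.X * qS ^ m) := by
      intro j hj
      have hT : tri (j+1) = tri j + j := rfl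
      rcases Nat.lt_or_ge j m with h | h
      · obtain ⟨d, rfl⟩ : ∃ d, m = j + 1 + d := ⟨m - j - 1, by omega⟩
        have hg : gb (j+1+d+1) (j+1) = gb (j+1+d) (j+1) + Polynomial.X ^ (d+1) * gb (j+1+d) j := by
          show gb ((j+1+d)+1) (j+1) = _
          rw [gb, show j+1+d-j = d+1 by omega]
        have hCX : (Polynomial.C (Polynomial.X ^ (d+1) * gb (j+1+d) j)
            : Polynomial (Polynomial ℤ)) = qS ^ (d+1) * Polynomial.C (gb (j+1+d) j) := by
          rw [map_mul, map_pow]; rfl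
        rw [gterm, gterm, gterm, hg,
          show (j+1+d+1) - (j+1) = d+1 by omega,
          show (j+1+d) - (j+1) = d by omega,
          show (j+1+d) - j = d+1 by omega,
          map_add, hCX, hT]
        ring
      · have hj' : j = m := by omega
        subst hj'
        rw [gterm_zero n j (j+1) (by omega), gterm, gterm, gb_self, gb_self,
          Nat.sub_self, Nat.sub_self, hT]
        ring
    have hz : gterm n m (m+1) = 0 := gterm_zero n m (m+1) (by omega)
    calc (∑ j ∈ range (m+1), gterm n m j) * (qS ^ n - Polynomial.X * qS ^ m)
        = (∑ j ∈ range (m+1), gterm n m j * qS ^ n)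
          - ∑ j ∈ range (m+1), gterm n m j * (Polynomial.X * qS ^ m) := by
          rw [mul_sub, sum_mul, sum_mul]
      _ = ∑ j ∈ range (m+1+1), gterm n (m+1) j := by
          rw [Finset.sum_range_succ' (fun j => gterm n (m+1) j) (m+1)]
          rw [Finset.sum_congr rfl (fun j hj => hpt j (mem_range.mp hj))]
          rw [Finset.sum_sub_distrib, h0]
          rw [Finset.sum_range_succ (fun j => gterm n m (j+1) * qS ^ n) m, hz]
          rw [Finset.sum_range_succ' (fun j => gterm n m j * qS ^ n) m]
          ring

lemma triA {n k : ℕ} (hk : k ≤ n) :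
    tri (n-k) + n*(n+1+k) = n*n + tri (n+1) + tri (k+1) := by
  obtain ⟨c, rfl⟩ : ∃ c, n = k + c := ⟨n-k, by omega⟩
  rw [show k+c-k = c by omega, show k+c+1 = c + (k+1) by ring, tri_add c (k+1)]
  have h2 := two_tri k
  have hpoly : (k+c)*(c+(k+1)+k) = (k+c)*(k+c) + c*(k+1) + k*(k+1) := by ring
  omega

lemma triB {n k : ℕ} (hk : k ≤ n) :
    tri (n+1+k) + n*(n-k) = n*n + tri (n+1) + tri (k+1) := by
  obtain ⟨c, rfl⟩ : ∃ c, n = k + c := ⟨n-k, by omega⟩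
  rw [show k+c-k = c by omega, show k+c+1+k = c + (2*k+1) by ring, tri_add c (2*k+1),
    show k+c+1 = c + (k+1) by ring, tri_add c (k+1)]
  have h2 := two_tri k
  have h3 : tri (2*k+1) = k*(2*k+1) := by
    have h4 := two_tri (2*k)
    have h5 : 2*k*(2*k+1) = 2*(k*(2*k+1)) := by ring
    omega
  have hpoly : k*(2*k+1) + c*(2*k+1) + (k+c)*c
      = (k+c)*(k+c) + k*(k+1) + c*(k+1) := by ring
  omega

lemma sign_sub {k n : ℕ} (hk : k ≤ n) :
    ((-1 : Polynomial (Polynomial ℤ)))^(n-k) = (-1)^(n+k) := by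
  obtain ⟨c, rfl⟩ : ∃ c, n = k + c := ⟨n-k, by omega⟩
  rw [show k+c-k = c by omega, show k+c+k = c + 2*k by ring, pow_add, pow_mul]
  norm_num

lemma geom (a t : ℕ) :
    (1 - Polynomial.X) * ∑ i ∈ range t, (Polynomial.X : Polynomial (Polynomial ℤ))^(a+i)
      = Polynomial.X^a - Polynomial.X^(a+t) := by
  induction t with
  | zero => simp
  | succ t ih =>
    rw [sum_range_succ, mul_add, ih, show a+(t+1) = (a+t)+1 by ring]
    ring

lemma tri_eq_sum : ∀ n, tri n = ∑ k ∈ range n, k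
  | 0 => rfl
  | n+1 => by rw [sum_range_succ, ← tri_eq_sum n]; rfl

lemma prod_split (n : ℕ) :
    ∏ k ∈ range (2*n+1), (qS ^ n - Polynomial.X * qS ^ k)
      = qS ^ (n*n + tri (n+1)) * ((1 - Polynomial.X)
        * ∏ k ∈ range n, ((qS^(k+1) - Polynomial.X) * (1 - Polynomial.X * qS^(k+1)))) := by
  rw [show 2*n+1 = n + (n+1) by ring, prod_range_add]
  have h2 : ∏ i ∈ range (n+1), (qS ^ n - Polynomial.X * qS ^ (n + i))
      = (qS^n * (1 - Polynomial.X)) * ∏ i ∈ range n, (qS^n * (1 - Polynomial.X * qS^(i+1))) := by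
    rw [Finset.prod_range_succ' (fun i => qS ^ n - Polynomial.X * qS ^ (n + i)) n]
    have hpt2 : ∀ i ∈ range n, qS ^ n - Polynomial.X * qS ^ (n + (i+1))
        = qS^n * (1 - Polynomial.X * qS^(i+1)) := by
      intro i _; rw [pow_add]; ring
    rw [prod_congr rfl hpt2, add_zero]
    ring
  have h1 : ∏ k ∈ range n, (qS ^ n - Polynomial.X * qS ^ k)
      = qS ^ (tri n) * ∏ k ∈ range n, (qS^(k+1) - Polynomial.X) := by
    have hpt : ∀ k ∈ range n, qS ^ n - Polynomial.X * qS ^ k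
        = qS ^ k * (qS^(n-k) - Polynomial.X) := by
      intro k hk
      have : qS ^ n = qS ^ k * qS ^ (n-k) := by
        rw [← pow_add]; congr 1; have := mem_range.mp hk; omega
      rw [this]; ring
    rw [prod_congr rfl hpt, prod_mul_distrib, Finset.prod_pow_eq_pow_sum, ← tri_eq_sum]
    congr 1
    rw [← Finset.prod_range_reflect (fun k => qS^(k+1) - Polynomial.X) n]
    apply prod_congr rfl
    intro k hk
    have := mem_range.mp hk
    rw [show n - 1 - k + 1 = n - k by omega]
  rw [h1, h2, prod_mul_distrib, prod_const, card_range]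
  rw [show (qS^n)^n = qS^(n*n) by rw [← pow_mul]]
  have : tri (n+1) = tri n + n := rfl
  rw [this, show n*n + (tri n + n) = tri n + n + n*n by ring, pow_add, pow_add,
    prod_mul_distrib]
  ring

noncomputable def G2 (n : ℕ) : Polynomial (Polynomial ℤ) :=
  ∑ k ∈ range (n+1), (-1)^(n+k) * Polynomial.C (gb (2*n+1) (n-k)) * qS ^ (tri (k+1))
    * ∑ i ∈ range (2*k+1), Polynomial.X ^ (n-k+i)

lemma claim2 (n : ℕ) : ∑ j ∈ range (2*n+1+1), gterm n (2*n+1) j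
    = qS ^ (n*n + tri (n+1)) * ((1 - Polynomial.X) * G2 n) := by
  rw [G2, mul_sum, mul_sum]
  rw [show 2*n+1+1 = (n+1) + (n+1) by ring, sum_range_add]
  rw [← Finset.sum_range_reflect (fun j => gterm n (2*n+1) j) (n+1)]
  rw [← sum_add_distrib]
  apply sum_congr rfl
  intro k hk
  have hk' : k ≤ n := by have := mem_range.mp hk; omega
  have hgeom := geom (n-k) (2*k+1)
  rw [show n-k+(2*k+1) = n+1+k by omega] at hgeom
  have hR : qS ^ (n*n + tri (n+1)) * ((1 - Polynomial.X) * ((-1)^(n+k)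
        * Polynomial.C (gb (2*n+1) (n-k)) * qS ^ (tri (k+1))
        * ∑ i ∈ range (2*k+1), Polynomial.X ^ (n-k+i)))
      = (-1)^(n+k) * Polynomial.C (gb (2*n+1) (n-k))
        * (qS ^ (n*n + tri (n+1)) * qS ^ (tri (k+1)))
        * (Polynomial.X^(n-k) - Polynomial.X^(n+1+k)) := by
    rw [← hgeom]; ring
  rw [hR]
  show gterm n (2*n+1) (n+1-1-k) + gterm n (2*n+1) (n+1+k) = _
  rw [show n+1-1-k = n-k by omega, gterm, gterm,
    show 2*n+1 - (n-k) = n+1+k by omega,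
    show 2*n+1 - (n+1+k) = n-k by omega,
    triA hk', triB hk', sign_sub hk',
    gb_symm (show n+1+k ≤ 2*n+1 by omega),
    show 2*n+1 - (n+1+k) = n-k by omega,
    show n+1+k = (n+k)+1 by ring, pow_succ, pow_add]
  ring

lemma two_sq (n : ℕ) : Pq n ^ 2
    = ∑ k ∈ range (n+1), Polynomial.C (((-1:ℤ))^k * (2*(k:ℤ)+1))
        * Polynomial.X ^ (tri (k+1)) * gb (2*n+1) (n-k) := by
  have h := gauss n (2*n+1)
  rw [prod_split n, claim2 n] at h
  have hc1 : (qS : Polynomial (Polynomial ℤ))^(n*n + tri (n+1)) ≠ 0 := by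
    apply pow_ne_zero
    rw [qS]
    simpa using (Polynomial.C_ne_zero.mpr (Polynomial.X_ne_zero (R := ℤ)))
  have hc2 : (1 - Polynomial.X : Polynomial (Polynomial ℤ)) ≠ 0 := by
    intro hq
    have h0 := congrArg (fun p => Polynomial.coeff p 1) hq
    simp [Polynomial.coeff_one] at h0
  have hPG : ∏ k ∈ range n, ((qS^(k+1) - Polynomial.X) * (1 - Polynomial.X * qS^(k+1)))
      = G2 n := mul_left_cancel₀ hc2 (mul_left_cancel₀ hc1 h)
  have hev := congrArg (Polynomial.eval (1 : Polynomial ℤ)) hPG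
  rw [Polynomial.eval_prod, G2, Polynomial.eval_finset_sum] at hev
  have hL : ∏ k ∈ range n, Polynomial.eval 1 ((qS^(k+1) - Polynomial.X) * (1 - Polynomial.X * qS^(k+1)))
      = (-1)^n * Pq n ^ 2 := by
    have hpt : ∀ k ∈ range n, Polynomial.eval 1 ((qS^(k+1) - Polynomial.X) * (1 - Polynomial.X * qS^(k+1)))
        = (-1) * ((1 - Polynomial.X^(k+1)) * (1 - Polynomial.X^(k+1))) := by
      intro k _
      simp [qS]
      try ring
    rw [prod_congr rfl hpt, prod_mul_distrib, prod_const, card_range, prod_mul_distrib]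
    rw [show (Pq n)^2 = Pq n * Pq n by ring]
    rfl
  have hRt : ∀ k ∈ range (n+1),
      Polynomial.eval 1 ((-1)^(n+k) * Polynomial.C (gb (2*n+1) (n-k)) * qS ^ (tri (k+1))
        * ∑ i ∈ range (2*k+1), Polynomial.X ^ (n-k+i))
      = (-1)^(n+k) * (Polynomial.C (2*(k:ℤ)+1) * Polynomial.X ^ (tri (k+1)) * gb (2*n+1) (n-k)) := by
    intro k _
    rw [Polynomial.eval_mul, Polynomial.eval_mul, Polynomial.eval_mul,
      Polynomial.eval_finset_sum]
    simp [qS]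
    ring
  rw [hL, sum_congr rfl hRt] at hev
  have hsq : ((-1 : Polynomial ℤ))^n * (-1)^n = 1 := by
    rw [← pow_add]
    exact Even.neg_one_pow ⟨n, by ring⟩
  calc Pq n ^ 2 = (-1)^n * ((-1)^n * Pq n ^ 2) := by rw [← mul_assoc, hsq, one_mul]
    _ = (-1)^n * ∑ k ∈ range (n+1), (-1)^(n+k)
        * (Polynomial.C (2*(k:ℤ)+1) * Polynomial.X ^ (tri (k+1)) * gb (2*n+1) (n-k)) := by
        rw [hev]
    _ = _ := by
        rw [mul_sum]
        apply sum_congr rfl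
        intro k _
        rw [map_mul, map_pow, map_neg, map_one, pow_add]
        linear_combination ((-1 : Polynomial ℤ))^k * Polynomial.C (2*(k:ℤ)+1)
          * Polynomial.X^(tri (k+1)) * gb (2*n+1) (n-k) * hsq

noncomputable def Ek (n k : ℕ) : Polynomial ℤ :=
  (∏ i ∈ Finset.Ico (n-k) n, (1 - Polynomial.X ^ (i+1)))
    * ∏ i ∈ Finset.Ico (n+1+k) (2*n+1), (1 - Polynomial.X ^ (i+1))

lemma Pq_mul_gb {n k : ℕ} (hk : k ≤ n) : Pq n * gb (2*n+1) (n-k) = Ek n k := by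
  have hgb := gb_mul_Pq (2*n+1) (n-k) (by omega)
  rw [show 2*n+1-(n-k) = n+1+k by omega] at hgb
  have hsplit1 : Pq (n-k) * ∏ i ∈ Finset.Ico (n-k) n, (1 - Polynomial.X ^ (i+1)) = Pq n := by
    rw [Pq, Pq, range_eq_Ico, range_eq_Ico]
    exact Finset.prod_Ico_consecutive _ (by omega) (by omega)
  have hsplit2 : Pq (n+1+k) * ∏ i ∈ Finset.Ico (n+1+k) (2*n+1), (1 - Polynomial.X ^ (i+1))
      = Pq (2*n+1) := by
    rw [Pq, Pq, range_eq_Ico, range_eq_Ico]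
    exact Finset.prod_Ico_consecutive _ (by omega) (by omega)
  have hne : Pq (n-k) * Pq (n+1+k) ≠ 0 := mul_ne_zero (Pq_ne_zero _) (Pq_ne_zero _)
  apply mul_right_cancel₀ hne
  calc Pq n * gb (2*n+1) (n-k) * (Pq (n-k) * Pq (n+1+k))
      = Pq n * (gb (2*n+1) (n-k) * (Pq (n-k) * Pq (n+1+k))) := by ring
    _ = Pq n * Pq (2*n+1) := by rw [hgb]
    _ = Ek n k * (Pq (n-k) * Pq (n+1+k)) := by rw [← hsplit1, ← hsplit2, Ek]; ring

lemma cube (n : ℕ) : Pq n ^ 3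
    = ∑ k ∈ range (n+1), Polynomial.C (((-1:ℤ))^k * (2*(k:ℤ)+1))
        * (Ek n k * Polynomial.X ^ (tri (k+1))) := by
  have h := congrArg (fun p => p * Pq n) (two_sq n)
  rw [show Pq n ^ 3 = Pq n ^2 * Pq n by ring, h, sum_mul]
  apply sum_congr rfl
  intro k hk
  rw [← Pq_mul_gb (show k ≤ n from by have := mem_range.mp hk; omega)]
  ring

lemma dvd_prod_sub_one (M : ℕ) (s : Finset ℕ) (f : ℕ → Polynomial ℤ)
    (h : ∀ i ∈ s, (Polynomial.X : Polynomial ℤ)^M ∣ f i - 1) :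
    (Polynomial.X : Polynomial ℤ)^M ∣ (∏ i ∈ s, f i) - 1 := by
  induction s using Finset.cons_induction with
  | empty => simp
  | cons a s ha ih =>
    rw [Finset.prod_cons]
    have h1 := h a (Finset.mem_cons_self a s)
    have h2 := ih (fun i hi => h i (Finset.mem_cons_of_mem hi))
    have hre : f a * (∏ i ∈ s, f i) - 1 = f a * ((∏ i ∈ s, f i) - 1) + (f a - 1) := by ring
    rw [hre]
    exact dvd_add (Dvd.dvd.mul_left h2 _) h1

lemma coeff_zero_Ek (n k : ℕ) : (Ek n k).coeff 0 = 1 := by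
  rw [Polynomial.coeff_zero_eq_eval_zero, Ek]
  simp [Polynomial.eval_prod]

lemma X_dvd_Ek {n k : ℕ} (hk : k ≤ n) :
    (Polynomial.X : Polynomial ℤ)^(n-k+1) ∣ Ek n k - 1 := by
  have key : ∀ (a b : ℕ), n-k ≤ a →
      (Polynomial.X : Polynomial ℤ)^(n-k+1)
        ∣ (∏ i ∈ Finset.Ico a b, ((1:Polynomial ℤ) - Polynomial.X ^ (i+1))) - 1 := by
    intro a b hab
    apply dvd_prod_sub_one
    intro i hi
    have hia := (Finset.mem_Ico.mp hi).1
    have hh : (1 : Polynomial ℤ) - Polynomial.X ^ (i+1) - 1 = -(Polynomial.X^(i+1)) := by ring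
    rw [hh]
    exact (pow_dvd_pow _ (by omega)).neg_right
  obtain ⟨g1, hg1⟩ := key (n-k) n le_rfl
  obtain ⟨g2, hg2⟩ := key (n+1+k) (2*n+1) (by omega)
  rw [Ek]
  refine ⟨(∏ i ∈ Finset.Ico (n-k) n, ((1:Polynomial ℤ) - Polynomial.X ^ (i+1))) * g2 + g1, ?_⟩
  linear_combination (∏ i ∈ Finset.Ico (n-k) n, ((1:Polynomial ℤ) - Polynomial.X ^ (i+1))) * hg2 + hg1

lemma coeff_Ek_mul {n k N : ℕ} (hk : k ≤ n) (hN : N ≤ n) :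
    (Ek n k * Polynomial.X ^ (tri (k+1))).coeff N = if tri (k+1) = N then 1 else 0 := by
  rw [Polynomial.coeff_mul_X_pow']
  by_cases ht : tri (k+1) ≤ N
  · rcases eq_or_lt_of_le ht with he | hlt
    · rw [if_pos ht, if_pos he, show N - tri (k+1) = 0 by omega, coeff_zero_Ek]
    · rw [if_pos ht, if_neg (by omega)]
      obtain ⟨g, hg⟩ := X_dvd_Ek hk
      have hE : Ek n k = 1 + Polynomial.X^(n-k+1) * g := by linear_combination hg
      rw [hE, Polynomial.coeff_add, mul_comm (Polynomial.X^(n-k+1)) g,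
        Polynomial.coeff_mul_X_pow']
      have hd : N - tri (k+1) < n-k+1 := by
        have := tri_ge k
        omega
      rw [if_neg (by omega), Polynomial.coeff_one, if_neg (by omega)]
      simp
  · rw [if_neg ht, if_neg (by omega)]

lemma coeff_cube {N n : ℕ} (hN : N ≤ n) : (Pq n ^ 3).coeff N
    = ∑ k ∈ range (n+1), if tri (k+1) = N then ((-1:ℤ))^k * (2*(k:ℤ)+1) else 0 := by
  rw [cube n, Polynomial.finset_sum_coeff]
  apply sum_congr rfl
  intro k hk
  rw [Polynomial.coeff_C_mul, coeff_Ek_mul (show k ≤ n from by have := mem_range.mp hk; omega) hN]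
  split_ifs <;> simp

lemma Pq_coeff_stable {d M M' : ℕ} (h1 : d < M) (h2 : M ≤ M') :
    (Pq M').coeff d = (Pq M).coeff d := by
  have hsplit : Pq M' = Pq M * ∏ i ∈ Finset.Ico M M', ((1:Polynomial ℤ) - Polynomial.X^(i+1)) := by
    rw [Pq, Pq, range_eq_Ico, range_eq_Ico, ← Finset.prod_Ico_consecutive _ (Nat.zero_le M) h2]
  obtain ⟨g, hg⟩ : (Polynomial.X : Polynomial ℤ)^(d+1)
      ∣ (∏ i ∈ Finset.Ico M M', ((1:Polynomial ℤ) - Polynomial.X^(i+1))) - 1 := by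
    apply dvd_prod_sub_one
    intro i hi
    have := (Finset.mem_Ico.mp hi).1
    rw [show (1:Polynomial ℤ) - Polynomial.X^(i+1) - 1 = -(Polynomial.X^(i+1)) by ring]
    exact (pow_dvd_pow _ (by omega)).neg_right
  have hre : Pq M' = Pq M + (Pq M * g) * Polynomial.X^(d+1) := by
    rw [hsplit]; linear_combination Pq M * hg
  rw [hre, Polynomial.coeff_add, Polynomial.coeff_mul_X_pow', if_neg (by omega), add_zero]

lemma coe_Pq (M : ℕ) : ((Pq M : Polynomial ℤ) : PowerSeries ℤ)
    = ∏ k ∈ Finset.range M, (1 - PowerSeries.X ^ (k+1)) := by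
  rw [Pq, ← Polynomial.coeToPowerSeries.ringHom_apply, map_prod]
  apply prod_congr rfl
  intro k _
  rw [map_sub, map_pow, map_one]
  congr 1
  rw [Polynomial.coeToPowerSeries.ringHom_apply, Polynomial.coe_X]

lemma eulerQ_coeff (d : ℕ) {M : ℕ} (hM : d < M) :
    PowerSeries.coeff (R := ℤ) d eulerQ = (Pq M).coeff d := by
  rw [eulerQ, PowerSeries.coeff_mk, ← coe_Pq, Polynomial.coeff_coe,
    Pq_coeff_stable (Nat.lt_succ_self d) (by omega : d + 1 ≤ M)]


lemma euler_cube_coeff (N : ℕ) :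
    PowerSeries.coeff (R := ℤ) N (eulerQ ^ 3) = (Pq (N+1) ^ 3).coeff N := by
  obtain ⟨g, hg⟩ : (PowerSeries.X : PowerSeries ℤ)^(N+1)
      ∣ eulerQ - ((Pq (N+1) : Polynomial ℤ) : PowerSeries ℤ) := by
    rw [PowerSeries.X_pow_dvd_iff]
    intro m hm
    rw [map_sub, eulerQ_coeff m hm, Polynomial.coeff_coe, sub_self]
  have hre : eulerQ ^ 3 = ((Pq (N+1) : Polynomial ℤ) : PowerSeries ℤ)^3
      + (PowerSeries.X : PowerSeries ℤ)^(N+1) * (g * (eulerQ^2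
        + eulerQ * ((Pq (N+1) : Polynomial ℤ) : PowerSeries ℤ)
        + ((Pq (N+1) : Polynomial ℤ) : PowerSeries ℤ)^2)) := by
    linear_combination (eulerQ^2 + eulerQ * ((Pq (N+1) : Polynomial ℤ) : PowerSeries ℤ)
      + ((Pq (N+1) : Polynomial ℤ) : PowerSeries ℤ)^2) * hg
  rw [hre, map_add]
  have h0 : PowerSeries.coeff (R := ℤ) N ((PowerSeries.X : PowerSeries ℤ)^(N+1) * (g * (eulerQ^2
      + eulerQ * ((Pq (N+1) : Polynomial ℤ) : PowerSeries ℤ)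
      + ((Pq (N+1) : Polynomial ℤ) : PowerSeries ℤ)^2))) = 0 :=
    PowerSeries.X_pow_dvd_iff.mp ⟨_, rfl⟩ N (Nat.lt_succ_self N)
  rw [h0, add_zero, ← Polynomial.coe_pow, Polynomial.coeff_coe]

lemma main_coeff (N : ℕ) : PowerSeries.coeff (R := ℤ) N (eulerQ^3)
    = ∑ k ∈ range (N+2), if tri (k+1) = N then ((-1:ℤ))^k * (2*(k:ℤ)+1) else 0 := by
  rw [euler_cube_coeff, coeff_cube (Nat.le_succ N)]

lemma tri_inj {a b : ℕ} (h : tri (a+1) = tri (b+1)) : a = b := by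
  have ha := two_tri a
  have hb := two_tri b
  have hab : a*(a+1) = b*(b+1) := by omega
  have mono : ∀ x y : ℕ, x < y → x*(x+1) < y*(y+1) := by
    intro x y hxy
    have h1 : x + 1 ≤ y := hxy
    nlinarith
  rcases lt_trichotomy a b with hl | he | hg
  · exact absurd hab (Nat.ne_of_lt (mono a b hl))
  · exact he
  · exact absurd hab.symm (Nat.ne_of_lt (mono b a hg))

lemma negOnePow_coe (t : ℕ) : ((Int.negOnePow (t:ℤ) : ℤˣ) : ℤ) = (-1:ℤ)^t := by
  rcases Nat.even_or_odd t with h | h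
  · rw [Int.negOnePow_even _ (by exact_mod_cast h), h.neg_one_pow]
    rfl
  · rw [Int.negOnePow_odd _ (by exact_mod_cast h), h.neg_one_pow]
    rfl

/-- The part of `(q;q)_∞³` supported on exponents divisible by 3 equals
`∑_{m ∈ ℤ} (−1)^m (6m+1) q^{3m(3m+1)/2}`: for every `n ≥ 0`, the coefficient of `q^{3n}`
in `(q;q)_∞³` equals `(−1)^m (6m+1)` whenever `3n = 3m(3m+1)/2` (stated multiplied out as
`2·(3n) = 3·(m(3m+1))`), and equals `0` if no such `m` exists. -/
theorem eulerQ_cubed_zero_mod_three_part (n : ℕ) :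
    (∀ m : ℤ, 2 * (3 * (n : ℤ)) = 3 * (m * (3 * m + 1)) →
      PowerSeries.coeff (R := ℤ) (3 * n) (eulerQ ^ 3) = (m.negOnePow : ℤ) * (6 * m + 1)) ∧
    ((¬ ∃ m : ℤ, 2 * (3 * (n : ℤ)) = 3 * (m * (3 * m + 1))) →
      PowerSeries.coeff (R := ℤ) (3 * n) (eulerQ ^ 3) = 0) := by
  constructor
  · intro m hm
    rw [main_coeff]
    obtain ⟨t, rfl | rfl⟩ := m.eq_nat_or_neg
    · have hmn : 2*(3*n) = 3*(t*(3*t+1)) := by exact_mod_cast hm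
      have h2t := two_tri (3*t)
      have hr : 3*t*(3*t+1) = 3*(t*(3*t+1)) := by ring
      have htri : tri (3*t+1) = 3*n := by omega
      have hklt : 3*t < 3*n+2 := by
        by_contra hc
        push_neg at hc
        have h1 : (3*n+2)*(3*n+3) ≤ 3*t*(3*t+1) := Nat.mul_le_mul (by omega) (by omega)
        have h2 : (3*n+2)*(3*n+3) = 9*(n*n)+15*n+6 := by ring
        omega
      rw [Finset.sum_eq_single_of_mem (3*t) (mem_range.mpr hklt)
        (fun b _ hb => if_neg (fun hh => hb (tri_inj (hh.trans htri.symm)))), if_pos htri]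
      rw [negOnePow_coe, show 3*t = t + 2*t by ring, pow_add, pow_mul, neg_one_sq, one_pow,
        mul_one]
      push_cast
      ring
    · rcases Nat.eq_zero_or_pos t with rfl | ht
      · push_cast at hm
        have hn : n = 0 := by omega
        subst hn
        rw [show 3*0 = 0 by rfl]
        rw [Finset.sum_range_succ, Finset.sum_range_succ, Finset.sum_range_zero]
        norm_num [tri]
      · obtain ⟨s, rfl⟩ : ∃ s, t = s+1 := ⟨t-1, by omega⟩
        have hmz : 2*(3*(n:ℤ)) = 3*(((s:ℤ)+1)*(3*(s:ℤ)+2)) := by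
          push_cast at hm ⊢
          linear_combination hm
        have hmn : 2*(3*n) = 3*((s+1)*(3*s+2)) := by exact_mod_cast hmz
        have h2t := two_tri (3*s+2)
        have hr : (3*s+2)*(3*s+2+1) = 3*((s+1)*(3*s+2)) := by ring
        have htri : tri (3*s+2+1) = 3*n := by omega
        have hklt : 3*s+2 < 3*n+2 := by
          by_contra hc
          push_neg at hc
          have h1 : (3*n+2)*(3*n+3) ≤ (3*s+2)*(3*s+2+1) := Nat.mul_le_mul (by omega) (by omega)
          have h2 : (3*n+2)*(3*n+3) = 9*(n*n)+15*n+6 := by ring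
          omega
        rw [Finset.sum_eq_single_of_mem (3*s+2) (mem_range.mpr hklt)
          (fun b _ hb => if_neg (fun hh => hb (tri_inj (hh.trans htri.symm)))), if_pos htri]
        rw [show (-(↑(s+1)) : ℤ) = -((s:ℤ)+1) by push_cast; ring, Int.negOnePow_neg,
          show ((s:ℤ)+1) = ((s+1 : ℕ) : ℤ) by push_cast; ring, negOnePow_coe,
          show 3*s+2 = s + 2*(s+1) by ring, pow_add, pow_mul, neg_one_sq, one_pow, mul_one,
          pow_succ]
        push_cast
        ring
  · intro hno
    rw [main_coeff]
    apply Finset.sum_eq_zero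
    intro k hk
    rw [if_neg]
    intro htr
    have h2t := two_tri k
    have h6 : 6*n = k*(k+1) := by omega
    have hk3 : k % 3 = 0 ∨ k % 3 = 1 ∨ k % 3 = 2 := by omega
    rcases hk3 with h3 | h3 | h3
    · obtain ⟨t, rfl⟩ : ∃ t, k = 3*t := ⟨k/3, by omega⟩
      apply hno
      refine ⟨(t:ℤ), ?_⟩
      have hr : 3*t*(3*t+1) = 3*(t*(3*t+1)) := by ring
      have h' : 2*(3*n) = 3*(t*(3*t+1)) := by omega
      exact_mod_cast h'
    · obtain ⟨t, rfl⟩ : ∃ t, k = 3*t+1 := ⟨k/3, by omega⟩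
      obtain ⟨A, hA⟩ : ∃ A, (3*t+1)*(3*t+1+1) = 3*A+2 := ⟨3*t*t+3*t, by ring⟩
      omega
    · obtain ⟨t, rfl⟩ : ∃ t, k = 3*t+2 := ⟨k/3, by omega⟩
      apply hno
      refine ⟨-((t:ℤ)+1), ?_⟩
      have hr : (3*t+2)*(3*t+2+1) = 3*((t+1)*(3*t+2)) := by ring
      have h' : 2*(3*n) = 3*((t+1)*(3*t+2)) := by omega
      have h'' := congrArg (fun x : ℕ => (x:ℤ)) h'
      push_cast at h''
      linear_combination h''
end
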